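/- arXiv:1610.05592 — 2 statements merged into one kernel-verified Lean document; each statement's English description precedes it below -/
import Mathlib

section
/- On M = ℝ³ with ω = dx∧dy∧dz and H = −x dy, the Hamiltonian vector field is v_H = ∂/∂z, and for α = z dx, β = z dy one has L_{v_H}α = dx and L_{v_H}β = dy (both exact), but L_{v_H}(α∧β) = 2z dx∧dy is not closed. Hence globally conserved quantities are not closed under wedge product. -/
noncomputable section

/-- Points/vectors of ℝ³. -/
abbrev E3 := Fin 3 → ℝ

/-- Exterior derivative of a 0-form on ℝ³. -/
def d0 (f : E3 → ℝ) : E3 → E3 → ℝ :=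
  fun x u => fderiv ℝ f x u

/-- Exterior derivative of a 1-form on ℝ³. -/
def d1 (α : E3 → E3 → ℝ) : E3 → E3 → E3 → ℝ :=
  fun x u v => fderiv ℝ (fun y => α y v) x u - fderiv ℝ (fun y => α y u) x v

/-- Exterior derivative of a 2-form on ℝ³. -/
def d2 (β : E3 → E3 → E3 → ℝ) : E3 → E3 → E3 → E3 → ℝ :=
  fun x u v w =>
    fderiv ℝ (fun y => β y v w) x u - fderiv ℝ (fun y => β y u w) x v
      + fderiv ℝ (fun y => β y u v) x w

/-- Lie derivative of a 1-form along a constant vector field `c` (Cartan's formula). -/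
def L1 (c : E3) (α : E3 → E3 → ℝ) : E3 → E3 → ℝ :=
  fun x u => d0 (fun y => α y c) x u + d1 α x c u

/-- Lie derivative of a 2-form along a constant vector field `c` (Cartan's formula). -/
def L2 (c : E3) (β : E3 → E3 → E3 → ℝ) : E3 → E3 → E3 → ℝ :=
  fun x u v => d1 (fun y u' => β y c u') x u v + d2 β x c u v

/-- The standard volume form `ω = dx ∧ dy ∧ dz` on ℝ³. -/
def ω3 : E3 → E3 → E3 → E3 → ℝ :=
  fun _ u v w =>
    u 0 * (v 1 * w 2 - v 2 * w 1) - u 1 * (v 0 * w 2 - v 2 * w 0)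
      + u 2 * (v 0 * w 1 - v 1 * w 0)

/-- The 1-form `H = −x dy`. -/
def H9 : E3 → E3 → ℝ := fun x u => -(x 0 * u 1)

/-- The Hamiltonian vector field `v_H = ∂/∂z` of `H = −x dy`. -/
def vH9 : E3 := ![0, 0, 1]

/-- The 1-form `α = z dx`. -/
def α9 : E3 → E3 → ℝ := fun x u => x 2 * u 0

/-- The 1-form `β = z dy`. -/
def β9 : E3 → E3 → ℝ := fun x u => x 2 * u 1

/-- The wedge product `α ∧ β` of the two 1-forms, a 2-form. -/
def αβ9 : E3 → E3 → E3 → ℝ := fun x u v => α9 x u * β9 x v - α9 x v * β9 x u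

lemma fd_lin (i : Fin 3) (c : ℝ) (x u : E3) :
    fderiv ℝ (fun y : E3 => y i * c) x u = u i * c := by
  have hp : HasFDerivAt (fun y : E3 => y i)
      (ContinuousLinearMap.proj i : E3 →L[ℝ] ℝ) x :=
    (ContinuousLinearMap.proj i : E3 →L[ℝ] ℝ).hasFDerivAt
  have h := hp.mul_const c
  rw [h.fderiv]; simp [mul_comm]

lemma fd_sq (c : ℝ) (x u : E3) :
    fderiv ℝ (fun y : E3 => y 2 * y 2 * c) x u = (2 * x 2 * u 2) * c := by
  have hp : HasFDerivAt (fun y : E3 => y 2)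
      (ContinuousLinearMap.proj 2 : E3 →L[ℝ] ℝ) x :=
    (ContinuousLinearMap.proj 2 : E3 →L[ℝ] ℝ).hasFDerivAt
  have h : HasFDerivAt (fun y : E3 => y 2 * y 2 * c) _ x := (hp.mul hp).mul_const c
  rw [h.fderiv]; simp; ring

lemma fd_const (c : ℝ) (x u : E3) :
    fderiv ℝ (fun _ : E3 => c) x u = 0 := by simp

lemma L2_eq : L2 vH9 αβ9 = fun x u v => 2 * x 2 * (u 0 * v 1 - u 1 * v 0) := by
  funext x u v
  have hz : ∀ w : E3, (fun y : E3 => αβ9 y vH9 w) = fun _ : E3 => (0:ℝ) := by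
    intro w; funext y; simp [αβ9, α9, β9, vH9]
  have hz' : ∀ w : E3, (fun y : E3 => αβ9 y w vH9) = fun _ : E3 => (0:ℝ) := by
    intro w; funext y; simp [αβ9, α9, β9, vH9]
  have hab : ∀ a b : E3, (fun y : E3 => αβ9 y a b)
      = fun y : E3 => y 2 * y 2 * (a 0 * b 1 - b 0 * a 1) := by
    intro a b; funext y; simp [αβ9, α9, β9]; ring
  simp only [L2, d1, d2, hz, hz', hab, fd_sq, fd_const]
  simp only [vH9, Matrix.cons_val_zero, Matrix.cons_val_one, Matrix.head_cons,
    Matrix.cons_val_two, Matrix.tail_cons]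
  ring

/-- On ℝ³ with `ω = dx∧dy∧dz` and `H = −x dy`, the Hamiltonian vector
field is `v_H = ∂/∂z` (i.e. `dH = −ι_{v_H}ω`); for `α = z dx`, `β = z dy` one has
`L_{v_H}α = dx` and `L_{v_H}β = dy`, which are exact, but
`L_{v_H}(α∧β) = 2z dx∧dy` is not closed.  Hence globally conserved quantities are not
closed under the wedge product. -/
theorem r3_wedge_of_globally_conserved_not_conserved :
    (∀ x u v : E3, d1 H9 x u v = -(ω3 x vH9 u v)) ∧
    (L1 vH9 α9 = fun _ u => u 0) ∧
    (L1 vH9 β9 = fun _ u => u 1) ∧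
    (∃ f : E3 → ℝ, L1 vH9 α9 = d0 f) ∧
    (∃ g : E3 → ℝ, L1 vH9 β9 = d0 g) ∧
    (L2 vH9 αβ9 = fun x u v => 2 * x 2 * (u 0 * v 1 - u 1 * v 0)) ∧
    d2 (L2 vH9 αβ9) ≠ 0 := by
  have hH : ∀ w : E3, (fun y : E3 => H9 y w) = fun y : E3 => y 0 * (-(w 1)) := by
    intro w; funext y; simp [H9]
  have hα : ∀ w : E3, (fun y : E3 => α9 y w) = fun y : E3 => y 2 * w 0 := by
    intro w; funext y; simp [α9]
  have hβ : ∀ w : E3, (fun y : E3 => β9 y w) = fun y : E3 => y 2 * w 1 := by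
    intro w; funext y; simp [β9]
  have h1 : L1 vH9 α9 = fun _ u => u 0 := by
    funext x u
    simp only [L1, d0, d1, hα, fd_lin]
    simp [vH9]
  have h2 : L1 vH9 β9 = fun _ u => u 1 := by
    funext x u
    simp only [L1, d0, d1, hβ, fd_lin]
    simp [vH9]
  refine ⟨?_, h1, h2, ⟨fun x => x 0, ?_⟩, ⟨fun x => x 1, ?_⟩, L2_eq, ?_⟩
  · intro x u v
    simp only [d1, hH, fd_lin, ω3, vH9, Matrix.cons_val_zero, Matrix.cons_val_one,
      Matrix.head_cons, Matrix.cons_val_two, Matrix.tail_cons]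
    ring
  · rw [h1]; funext x u
    have : (fun y : E3 => y 0) = fun y : E3 => y 0 * 1 := by funext y; ring
    simp [d0, this, fd_lin]
  · rw [h2]; funext x u
    have : (fun y : E3 => y 1) = fun y : E3 => y 1 * 1 := by funext y; ring
    simp [d0, this, fd_lin]
  · rw [L2_eq]
    intro h
    have := congrFun (congrFun (congrFun (congrFun h 0) ![0,0,1]) ![1,0,0]) ![0,1,0]
    have hrw : ∀ a b : E3, (fun y : E3 => 2 * y 2 * (a 0 * b 1 - a 1 * b 0))
        = fun y : E3 => y 2 * (2 * (a 0 * b 1 - a 1 * b 0)) := by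
      intro a b; funext y; ring
    simp only [d2, hrw, fd_lin, Pi.zero_apply] at this
    norm_num at this
    have h3 : (![0, 0, 1] : E3) 2 = 1 := rfl
    rw [h3] at this; norm_num at this

end
end

section
/- Let M be a manifold, v a complete vector field with flow φ_t, Σ a compact oriented closed d-manifold, and α ∈ Ω^d(M) with L_v α closed. Then for any smooth σ_0: Σ → M and σ_t := φ_t ∘ σ_0, one has ∫_Σ σ_t^*α − ∫_Σ σ_0^*α = t · ∫_Σ σ_0^*(L_v α); in particular this quantity depends only on t and the homotopy class of σ_0, linearly in t. -/
/-- Let `Σ` be a compact oriented closed `d`-manifold, `v` a complete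
vector field on `M` with flow `φ_t`, `σ₀ : Σ → M` smooth and `σ_t := φ_t ∘ σ₀`.  In the
abstract encoding: `F` are forms on `M` with `d` and Lie derivative `L`; `Fsig` forms on
`Σ` with `dsig`; `P t = σ_t^*` commutes with `d` and satisfies the transport equation
`d/dt ∫_Σ σ_t^*β = ∫_Σ σ_t^*(L_v β)`; `I` integrates over `Σ` and kills exact forms
(Stokes, `∂Σ = ∅`).  If `α ∈ Ω^d(M)` is locally conserved (`d(L v α) = 0`), then
`∫_Σ σ_t^*α − ∫_Σ σ₀^*α = t · ∫_Σ σ₀^*(L_v α)`: linear in `t`, and depending only on the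
(homotopy class of the) initial map `σ₀`. -/
theorem integral_difference_linear_in_time
    {F Fsig V : Type*} [AddCommGroup F] [Module ℝ F] [AddCommGroup Fsig] [Module ℝ Fsig]
    (d : F →ₗ[ℝ] F) (ic : V → F →ₗ[ℝ] F) (L : V → F →ₗ[ℝ] F)
    (hCartan : ∀ (X : V) (β : F), L X β = d (ic X β) + ic X (d β))
    (v : V)
    (dsig : Fsig →ₗ[ℝ] Fsig)
    (P : ℝ → F →ₗ[ℝ] Fsig)                      -- pullback by σ_t = φ_t ∘ σ₀
    (I : Fsig →ₗ[ℝ] ℝ)                           -- integration over Σ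
    (hPd : ∀ (t : ℝ) (β : F), P t (d β) = dsig (P t β))
    (hStokes : ∀ β : Fsig, I (dsig β) = 0)          -- Stokes, Σ closed
    (hder : ∀ (β : F) (t : ℝ),
      HasDerivAt (fun s : ℝ => I (P s β)) (I (P t (L v β))) t)
    (α : F) (hα : d (L v α) = 0) :
    ∀ t : ℝ, I (P t α) - I (P 0 α) = t * I (P 0 (L v α)) := by
  intro t
  have hLL : ∀ s : ℝ, I (P s (L v (L v α))) = 0 := by
    intro s
    rw [hCartan, hα, map_zero, add_zero, hPd, hStokes]
  have hgconst : ∀ s : ℝ, I (P s (L v α)) = I (P 0 (L v α)) := by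
    have hd : ∀ u : ℝ, HasDerivAt (fun r : ℝ => I (P r (L v α))) 0 u := by
      intro u
      have h := hder (L v α) u
      rwa [hLL u] at h
    intro s
    have := is_const_of_deriv_eq_zero (f := fun r : ℝ => I (P r (L v α)))
      (fun u => (hd u).differentiableAt) (fun u => (hd u).deriv) s 0
    simpa using this
  set c := I (P 0 (L v α)) with hc
  have hd : ∀ u : ℝ, HasDerivAt (fun r : ℝ => I (P r α) - r * c) 0 u := by
    intro u
    have h1 := hder α u
    rw [hgconst u] at h1
    have h2 := h1.sub ((hasDerivAt_id u).mul_const c)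
    simp only [one_mul, sub_self] at h2
    exact h2
  have := is_const_of_deriv_eq_zero (f := fun r : ℝ => I (P r α) - r * c)
    (fun u => (hd u).differentiableAt) (fun u => (hd u).deriv) t 0
  simp only [zero_mul, sub_zero] at this
  linarith
end
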